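/- If a sequence (x_n) in a Banach space converges uniformly weakly to x, then every subsequence of (x_n) is Cesàro-convergent to x. -/

import Mathlib

open Filter

/-- If `(x n)` converges uniformly weakly to `x₀` in a Banach space, then every subsequence
of `(x n)` is Cesàro-convergent to `x₀`. -/
theorem uniformly_weakly_convergent_cesaro {X : Type*} [NormedAddCommGroup X]
    [NormedSpace ℝ X] [CompleteSpace X] (x : ℕ → X) (x₀ : X)
    (huw : ∀ ε : ℝ, 0 < ε → ∃ n₀ : ℕ, ∀ f : X →L[ℝ] ℝ, ‖f‖ ≤ 1 →
      ∀ s : Finset ℕ, (∀ n ∈ s, ε ≤ |f (x n - x₀)|) → s.card ≤ n₀) :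
    ∀ φ : ℕ → ℕ, StrictMono φ →
      Tendsto (fun N : ℕ => (N : ℝ)⁻¹ • ∑ k ∈ Finset.range N, x (φ k)) atTop (nhds x₀) := by
  -- Step 1: (x n) converges weakly to x₀
  have hweak : ∀ f : X →L[ℝ] ℝ, Tendsto (fun n => f (x n - x₀)) atTop (nhds 0) := by
    intro f
    rw [NormedAddCommGroup.tendsto_nhds_zero]
    intro ε hε
    rcases eq_or_ne f 0 with rfl | hf
    · exact Eventually.of_forall fun n => by simpa using hε
    have hfn : (0:ℝ) < ‖f‖ := norm_pos_iff.mpr hf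
    set g : X →L[ℝ] ℝ := ‖f‖⁻¹ • f with hg
    have hgnorm : ‖g‖ ≤ 1 := by
      refine ContinuousLinearMap.opNorm_le_bound _ zero_le_one fun v => ?_
      rw [hg]
      simp only [ContinuousLinearMap.smul_apply, smul_eq_mul, norm_mul, norm_inv, norm_norm,
        one_mul]
      calc ‖f‖⁻¹ * ‖f v‖ ≤ ‖f‖⁻¹ * (‖f‖ * ‖v‖) :=
            mul_le_mul_of_nonneg_left (f.le_opNorm v) (inv_nonneg.mpr (norm_nonneg f))
        _ = ‖v‖ := by field_simp
    obtain ⟨n₀, hn₀⟩ := huw (ε / ‖f‖) (div_pos hε hfn)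
    have hcond : ∀ n : ℕ, ε ≤ ‖f (x n - x₀)‖ → ε / ‖f‖ ≤ |g (x n - x₀)| := by
      intro n hn
      have : g (x n - x₀) = ‖f‖⁻¹ * f (x n - x₀) := by
        rw [hg]; simp
      rw [this, abs_mul, abs_inv, abs_norm, div_eq_inv_mul]
      exact mul_le_mul_of_nonneg_left (by rwa [Real.norm_eq_abs] at hn)
        (inv_nonneg.mpr (norm_nonneg f))
    have hfin : {n : ℕ | ε ≤ ‖f (x n - x₀)‖}.Finite := by
      rw [← Set.not_infinite]
      intro hinf
      obtain ⟨t, hts, htf, htc⟩ := hinf.exists_subset_ncard_eq (n₀ + 1)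
      have hcard := hn₀ g hgnorm htf.toFinset (by
        intro n hn
        exact hcond n (hts (htf.mem_toFinset.mp hn)))
      rw [Set.ncard_eq_toFinset_card _ htf] at htc
      omega
    have := hfin.eventually_cofinite_notMem
    rw [Nat.cofinite_eq_atTop] at this
    filter_upwards [this] with n hn
    exact lt_of_not_ge (by simpa using hn)
  -- Step 2: boundedness of ‖x n - x₀‖ via Banach–Steinhaus
  have hbound : ∃ C : ℝ, 0 ≤ C ∧ ∀ n, ‖x n - x₀‖ ≤ C := by
    have hpt : ∀ f : X →L[ℝ] ℝ, ∃ C : ℝ,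
        ∀ n : ℕ, ‖(NormedSpace.inclusionInDoubleDual ℝ X (x n - x₀)) f‖ ≤ C := by
      intro f
      obtain ⟨C, hCb⟩ := ((hweak f).norm).bddAbove_range
      refine ⟨C, fun n => ?_⟩
      have h3 := hCb ⟨n, rfl⟩
      simpa [NormedSpace.dual_def] using h3
    obtain ⟨C', hC'⟩ := banach_steinhaus
      (g := fun n : ℕ => NormedSpace.inclusionInDoubleDual ℝ X (x n - x₀)) hpt
    refine ⟨max C' 0, le_max_right _ _, fun n => ?_⟩
    have h1 := hC' n
    have h2 : ‖NormedSpace.inclusionInDoubleDual ℝ X (x n - x₀)‖ = ‖x n - x₀‖ :=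
      (NormedSpace.inclusionInDoubleDualLi ℝ (E := X)).norm_map (x n - x₀)
    rw [h2] at h1
    exact le_trans h1 (le_max_left _ _)
  -- Step 3: main argument
  intro φ hφ
  obtain ⟨C, hC0, hC⟩ := hbound
  rw [Metric.tendsto_atTop]
  intro ε hε
  obtain ⟨n₀, hn₀⟩ := huw (ε / 4) (by positivity)
  obtain ⟨N₁, hN₁⟩ := exists_nat_gt (4 * (n₀ * C) / ε)
  refine ⟨max N₁ 1, fun N hN => ?_⟩
  have hN1 : 1 ≤ N := le_trans (le_max_right _ _) hN
  have hNpos : (0:ℝ) < N := by exact_mod_cast hN1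
  have hNN₁ : (N₁ : ℝ) ≤ N := by exact_mod_cast le_trans (le_max_left _ _) hN
  have hsmall : n₀ * C / N < ε / 4 := by
    rw [div_lt_iff₀ hNpos]
    have h4 : 4 * ((n₀ : ℝ) * C) < ε * N := by
      rw [div_lt_iff₀ hε] at hN₁
      calc 4 * ((n₀:ℝ) * C) < N₁ * ε := hN₁
        _ ≤ N * ε := mul_le_mul_of_nonneg_right hNN₁ hε.le
        _ = ε * N := mul_comm _ _
    linarith
  have key : dist ((N : ℝ)⁻¹ • ∑ k ∈ Finset.range N, x (φ k)) x₀
      = ‖(N : ℝ)⁻¹ • ∑ k ∈ Finset.range N, (x (φ k) - x₀)‖ := by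
    rw [dist_eq_norm]
    congr 1
    rw [Finset.sum_sub_distrib, smul_sub, Finset.sum_const, Finset.card_range,
      ← Nat.cast_smul_eq_nsmul ℝ, inv_smul_smul₀ hNpos.ne']
  rw [key]
  set w := (N : ℝ)⁻¹ • ∑ k ∈ Finset.range N, (x (φ k) - x₀) with hw
  have hMnn : (0:ℝ) ≤ n₀ * C / N + ε / 4 := by positivity
  have hdual : ∀ f : X →L[ℝ] ℝ, ‖f w‖ ≤ (n₀ * C / N + ε / 4) * ‖f‖ := by
    intro f
    rcases eq_or_ne f 0 with rfl | hf
    · simpa using mul_nonneg hMnn (norm_nonneg (0 : X →L[ℝ] ℝ))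
    have hfn : (0:ℝ) < ‖f‖ := norm_pos_iff.mpr hf
    set g : X →L[ℝ] ℝ := ‖f‖⁻¹ • f with hg
    have hgnorm : ‖g‖ ≤ 1 := by
      refine ContinuousLinearMap.opNorm_le_bound _ zero_le_one fun v => ?_
      rw [hg]
      simp only [ContinuousLinearMap.smul_apply, smul_eq_mul, norm_mul, norm_inv, norm_norm,
        one_mul]
      calc ‖f‖⁻¹ * ‖f v‖ ≤ ‖f‖⁻¹ * (‖f‖ * ‖v‖) :=
            mul_le_mul_of_nonneg_left (f.le_opNorm v) (inv_nonneg.mpr (norm_nonneg f))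
        _ = ‖v‖ := by field_simp
    set B := (Finset.range N).filter (fun k => ε / 4 ≤ ‖g (x (φ k) - x₀)‖) with hB
    have hBcard : B.card ≤ n₀ := by
      have h := hn₀ g hgnorm (B.image φ) (by
        intro n hn
        obtain ⟨k, hk, rfl⟩ := Finset.mem_image.mp hn
        have := (Finset.mem_filter.mp hk).2
        rwa [Real.norm_eq_abs] at this)
      rwa [Finset.card_image_of_injective _ hφ.injective] at h
    have hsum : ∑ k ∈ Finset.range N, ‖g (x (φ k) - x₀)‖ ≤ n₀ * C + N * (ε / 4) := by
      rw [← Finset.sum_filter_add_sum_filter_not (Finset.range N)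
        (fun k => ε / 4 ≤ ‖g (x (φ k) - x₀)‖)]
      have h1 : ∑ k ∈ B, ‖g (x (φ k) - x₀)‖ ≤ (B.card : ℝ) * C := by
        rw [← nsmul_eq_mul]
        refine Finset.sum_le_card_nsmul _ _ _ (fun k _ => ?_)
        calc ‖g (x (φ k) - x₀)‖ ≤ ‖g‖ * ‖x (φ k) - x₀‖ := g.le_opNorm _
          _ ≤ 1 * C := mul_le_mul hgnorm (hC _) (norm_nonneg _) zero_le_one
          _ = C := one_mul C
      have h2 : ∑ k ∈ (Finset.range N).filter (fun k => ¬ (ε / 4 ≤ ‖g (x (φ k) - x₀)‖)),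
          ‖g (x (φ k) - x₀)‖ ≤ (N : ℝ) * (ε / 4) := by
        calc ∑ k ∈ (Finset.range N).filter (fun k => ¬ (ε / 4 ≤ ‖g (x (φ k) - x₀)‖)),
            ‖g (x (φ k) - x₀)‖
            ≤ ∑ _k ∈ (Finset.range N).filter (fun k => ¬ (ε / 4 ≤ ‖g (x (φ k) - x₀)‖)),
              (ε / 4) := Finset.sum_le_sum (fun k hk =>
                (lt_of_not_ge (Finset.mem_filter.mp hk).2).le)
          _ = ((Finset.range N).filter
              (fun k => ¬ (ε / 4 ≤ ‖g (x (φ k) - x₀)‖))).card * (ε / 4) := by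
                rw [Finset.sum_const, nsmul_eq_mul]
          _ ≤ (N : ℝ) * (ε / 4) := by
                refine mul_le_mul_of_nonneg_right ?_ (by positivity)
                exact_mod_cast le_trans (Finset.card_filter_le _ _) (Finset.card_range N).le
      have hBC : (B.card : ℝ) * C ≤ (n₀ : ℝ) * C :=
        mul_le_mul_of_nonneg_right (by exact_mod_cast hBcard) hC0
      linarith
    have hgw : ‖g w‖ ≤ (N:ℝ)⁻¹ * (n₀ * C + N * (ε / 4)) := by
      rw [hw, map_smul]
      rw [norm_smul, norm_inv, Real.norm_natCast]
      refine mul_le_mul_of_nonneg_left ?_ (by positivity)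
      rw [map_sum]
      exact le_trans (norm_sum_le _ _) hsum
    have hfw : f w = ‖f‖ * g w := by
      rw [hg]
      simp only [ContinuousLinearMap.smul_apply, smul_eq_mul]
      rw [← mul_assoc, mul_inv_cancel₀ hfn.ne', one_mul]
    rw [hfw, Real.norm_eq_abs, abs_mul, abs_norm, mul_comm]
    refine mul_le_mul_of_nonneg_right ?_ hfn.le
    calc |g w| = ‖g w‖ := (Real.norm_eq_abs _).symm
      _ ≤ (N:ℝ)⁻¹ * (n₀ * C + N * (ε / 4)) := hgw
      _ = n₀ * C / N + ε / 4 := by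
          field_simp
  have := NormedSpace.norm_le_dual_bound ℝ w hMnn hdual
  calc ‖w‖ ≤ n₀ * C / N + ε / 4 := this
    _ < ε / 4 + ε / 4 := by linarith
    _ < ε := by linarith
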